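/- Lemma 3.3: Let x ∈ D([0,T]) and a < b be such that N = N^{a,b}(x) is finite and N ≥ 2. Then there exists A ∈ 𝔸 such that ∫_0^T x(t) dA(t) ≥ b − a, ‖A‖(T) = 2, and ‖A‖_∞ = 1/(N − 1). -/

import Mathlib

open MeasureTheory Filter Set Topology

noncomputable section

/-- `x` is càdlàg on `[0,T]`: right-continuous at every `t ∈ [0,T)` and
admitting a left limit at every `t ∈ (0,T]`. -/
def Cadlag (T : ℝ) (x : ℝ → ℝ) : Prop :=
  (∀ t ∈ Set.Ico (0:ℝ) T, Filter.Tendsto x (nhdsWithin t (Set.Ioi t)) (nhds (x t))) ∧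
  (∀ t ∈ Set.Ioc (0:ℝ) T, ∃ L : ℝ, Filter.Tendsto x (nhdsWithin t (Set.Iio t)) (nhds L))

/-- membership in `𝕍`: càdlàg of finite total variation on `[0,T]`. -/
def MemV (T : ℝ) (v : ℝ → ℝ) : Prop :=
  Cadlag T v ∧ BoundedVariationOn v (Set.Icc 0 T)

/-- `μ` is the finite signed (Lebesgue–Stieltjes) measure induced by `v` on `[0,T]`:
`μ([0,t]) = v(t)` for `t ∈ [0,T]`, and `μ` vanishes outside `[0,T]`. -/
def Represents (T : ℝ) (μ : MeasureTheory.SignedMeasure ℝ) (v : ℝ → ℝ) : Prop :=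
  (∀ t ∈ Set.Icc (0:ℝ) T, μ (Set.Icc 0 t) = v t) ∧
  (∀ s : Set ℝ, MeasurableSet s → s ∩ Set.Icc (0:ℝ) T = ∅ → μ s = 0)

/-- Integral of `f` against a signed measure. -/
noncomputable def sInt (μ : MeasureTheory.SignedMeasure ℝ) (f : ℝ → ℝ) : ℝ :=
  (∫ t, f t ∂μ.toJordanDecomposition.posPart) - (∫ t, f t ∂μ.toJordanDecomposition.negPart)

/-- `∫_{[0,T]} f dv` : integral of `f` with respect to the Lebesgue–Stieltjes
signed measure induced by `v` on `[0,T]`. -/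
noncomputable def intD (T : ℝ) (f v : ℝ → ℝ) : ℝ :=
  letI := Classical.propDecidable (∃ μ : MeasureTheory.SignedMeasure ℝ, Represents T μ v)
  if h : ∃ μ : MeasureTheory.SignedMeasure ℝ, Represents T μ v then sInt h.choose f else 0

/-- S-convergence `x_n →_S x₀` on `D([0,T])`. -/
def SConv (T : ℝ) (x : ℕ → ℝ → ℝ) (x₀ : ℝ → ℝ) : Prop :=
  ∀ ε > (0:ℝ), ∃ v : ℕ → ℝ → ℝ, ∃ v₀ : ℝ → ℝ,
    (∀ n, MemV T (v n)) ∧ MemV T v₀ ∧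
    (∀ n, ∀ t ∈ Set.Icc (0:ℝ) T, |x n t - v n t| ≤ ε) ∧
    (∀ t ∈ Set.Icc (0:ℝ) T, |x₀ t - v₀ t| ≤ ε) ∧
    (∀ f : ℝ → ℝ, Continuous f →
      Filter.Tendsto (fun n => intD T f (v n)) Filter.atTop (nhds (intD T f v₀)))

/-- `x_n ⇒*_S x₀` : every subsequence contains a further subsequence `→_S`-converging to `x₀`. -/
def SStarConv (T : ℝ) (x : ℕ → ℝ → ℝ) (x₀ : ℝ → ℝ) : Prop :=
  ∀ φ : ℕ → ℕ, StrictMono φ →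
    ∃ ψ : ℕ → ℕ, StrictMono ψ ∧ SConv T (fun k => x (φ (ψ k))) x₀

/-- membership in `𝔸([0,T])`: continuous, of finite variation, vanishing at `0`. -/
def MemA (T : ℝ) (A : ℝ → ℝ) : Prop :=
  ContinuousOn A (Set.Icc 0 T) ∧ BoundedVariationOn A (Set.Icc 0 T) ∧ A 0 = 0

/-- `A_n →_τ A₀` : uniform convergence on `[0,T]` together with uniformly bounded
total variations. -/
def TauConv (T : ℝ) (A : ℕ → ℝ → ℝ) (A₀ : ℝ → ℝ) : Prop :=
  TendstoUniformlyOn (fun n => A n) A₀ Filter.atTop (Set.Icc 0 T) ∧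
  ∃ M : ℝ, ∀ n, eVariationOn (A n) (Set.Icc 0 T) ≤ ENNReal.ofReal M

/-- `x` has (at least) `k` up-crossings of the levels `a < b` on `[0,T]`. -/
def HasUpcrossings (T a b : ℝ) (x : ℝ → ℝ) (k : ℕ) : Prop :=
  ∃ s u : Fin k → ℝ, (∀ i, 0 ≤ s i ∧ s i < u i ∧ u i ≤ T) ∧
    (∀ i j : Fin k, i < j → u i < s j) ∧
    (∀ i, x (s i) < a ∧ b < x (u i))

/-- `x` has (at least) `k` `η`-oscillations on `[0,T]`. -/
def HasOscillations (T η : ℝ) (x : ℝ → ℝ) (k : ℕ) : Prop :=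
  ∃ s u : Fin k → ℝ, (∀ i, 0 ≤ s i ∧ s i < u i ∧ u i ≤ T) ∧
    (∀ i j : Fin k, i < j → u i ≤ s j) ∧
    (∀ i, |x (u i) - x (s i)| > η)


def l33ramp (δ p t : ℝ) : ℝ := min δ (max (t - p) 0)

lemma l33ramp_nonneg {δ : ℝ} (hδ : 0 ≤ δ) (p t : ℝ) : 0 ≤ l33ramp δ p t :=
  le_min hδ (le_max_right _ _)

lemma l33ramp_le (δ p t : ℝ) : l33ramp δ p t ≤ δ := min_le_left _ _

lemma l33ramp_mono (δ p : ℝ) : Monotone (l33ramp δ p) := fun s t hst =>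
  min_le_min le_rfl (max_le_max (by linarith) le_rfl)

lemma l33ramp_of_le {δ p t : ℝ} (hδ : 0 ≤ δ) (h : t ≤ p) : l33ramp δ p t = 0 := by
  unfold l33ramp
  rw [max_eq_right (by linarith), min_eq_right hδ]

lemma l33ramp_of_ge {δ p t : ℝ} (hδ : 0 ≤ δ) (h : p + δ ≤ t) : l33ramp δ p t = δ := by
  unfold l33ramp
  rw [max_eq_left (by linarith), min_eq_left (by linarith)]

lemma l33ramp_cont (δ p : ℝ) : Continuous (l33ramp δ p) :=
  continuous_const.min (((continuous_id.sub continuous_const).max continuous_const))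

lemma l33ramp_anti {δ p p' : ℝ} (h : p ≤ p') (t : ℝ) : l33ramp δ p' t ≤ l33ramp δ p t :=
  min_le_min le_rfl (max_le_max (by linarith) le_rfl)

lemma l33_vol {δ p : ℝ} (hδ : 0 < δ) (hp : 0 ≤ p) (t : ℝ) :
    volume (Set.Icc 0 t ∩ Set.Ico p (p + δ)) = ENNReal.ofReal (l33ramp δ p t) := by
  rcases le_or_gt t p with h | h
  · rw [l33ramp_of_le hδ.le h, ENNReal.ofReal_zero]
    refine measure_mono_null (fun y hy => ?_) (?_ : volume (Set.Icc p t) = 0)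
    · exact ⟨hy.2.1, hy.1.2⟩
    · rw [Real.volume_Icc]; exact ENNReal.ofReal_eq_zero.2 (by linarith)
  · rcases le_or_gt (p + δ) t with h2 | h2
    · rw [l33ramp_of_ge hδ.le h2]
      have : Set.Icc 0 t ∩ Set.Ico p (p + δ) = Set.Ico p (p + δ) := by
        ext y; simp only [Set.mem_inter_iff, Set.mem_Icc, Set.mem_Ico]
        constructor
        · tauto
        · intro hy; exact ⟨⟨by linarith [hy.1], by linarith [hy.2]⟩, hy⟩
      rw [this, Real.volume_Ico]; ring_nf
    · have hr : l33ramp δ p t = t - p := by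
        unfold l33ramp
        rw [max_eq_left (by linarith), min_eq_right (by linarith)]
      rw [hr]
      have : Set.Icc 0 t ∩ Set.Ico p (p + δ) = Set.Icc p t := by
        ext y; simp only [Set.mem_inter_iff, Set.mem_Icc, Set.mem_Ico]
        constructor
        · rintro ⟨⟨_, h1⟩, h2, _⟩; exact ⟨h2, h1⟩
        · rintro ⟨h1, h2⟩; exact ⟨⟨by linarith, h2⟩, h1, by linarith⟩
      rw [this, Real.volume_Icc]

lemma l33_evar_neg (f : ℝ → ℝ) (s : Set ℝ) :
    eVariationOn (fun t => -f t) s = eVariationOn f s := by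
  simp_rw [eVariationOn, edist_neg_neg]

lemma l33_anti_evar {f : ℝ → ℝ} {s : Set ℝ} (hf : AntitoneOn f s) {a b : ℝ}
    (as : a ∈ s) (bs : b ∈ s) :
    eVariationOn f (s ∩ Set.Icc a b) ≤ ENNReal.ofReal (f a - f b) := by
  rw [← l33_evar_neg f]
  have hm : MonotoneOn (fun t => -f t) s := fun u hu v hv huv => neg_le_neg (hf hu hv huv)
  have h2 := hm.eVariationOn_le as bs
  rwa [show -f b - -f a = f a - f b by ring] at h2



lemma l33_aemeas {T : ℝ} (x : ℝ → ℝ)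
    (hx : ∀ t ∈ Set.Ico (0:ℝ) T, Filter.Tendsto x (nhdsWithin t (Set.Ioi t)) (nhds (x t)))
    {S : Set ℝ} (hS : MeasurableSet S) (hsub : S ⊆ Set.Ico 0 T) :
    AEMeasurable x (volume.restrict S) := by
  set g : ℕ → ℝ → ℝ := fun n t => x ((⌊t * 2 ^ n⌋ + 1 : ℤ) / 2 ^ n) with hg
  have hgm : ∀ n, Measurable (g n) := by
    intro n
    have h1 : Measurable fun t : ℝ => (⌊t * 2 ^ n⌋ : ℤ) :=
      (measurable_id.mul_const _).floor
    exact (measurable_from_top (f := fun k : ℤ => x ((k + 1 : ℤ) / 2 ^ n))).comp h1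
  refine aemeasurable_of_tendsto_metrizable_ae atTop (fun n => (hgm n).aemeasurable) ?_
  filter_upwards [ae_restrict_mem hS] with t ht
  have htT := hsub ht
  set y : ℕ → ℝ := fun n => ((⌊t * 2 ^ n⌋ + 1 : ℤ) : ℝ) / 2 ^ n with hy
  have hygt : ∀ n, t < y n := by
    intro n
    have h2 : (0:ℝ) < 2 ^ n := by positivity
    rw [hy, lt_div_iff₀ h2]
    push_cast
    linarith [Int.lt_floor_add_one (t * 2 ^ n)]
  have hyle : ∀ n, y n ≤ t + (1/2) ^ n := by
    intro n
    have h2 : (0:ℝ) < 2 ^ n := by positivity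
    rw [hy, div_le_iff₀ h2]
    have := Int.floor_le (t * 2 ^ n)
    push_cast
    rw [add_mul, one_div, inv_pow, inv_mul_cancel₀ (ne_of_gt h2)]
    linarith
  have hylim : Filter.Tendsto y atTop (nhdsWithin t (Set.Ioi t)) := by
    rw [tendsto_nhdsWithin_iff]
    constructor
    · have hup : Filter.Tendsto (fun n : ℕ => t + (1/2:ℝ) ^ n) atTop (nhds t) := by
        have := tendsto_pow_atTop_nhds_zero_of_lt_one (by norm_num : (0:ℝ) ≤ 1/2)
          (by norm_num : (1/2:ℝ) < 1)
        simpa using tendsto_const_nhds.add this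
      exact tendsto_of_tendsto_of_tendsto_of_le_of_le tendsto_const_nhds hup
        (fun n => (hygt n).le) hyle
    · exact Filter.Eventually.of_forall fun n => hygt n
  exact (hx t htT).comp hylim



/-- signed measure applied, via Jordan decomposition. -/
lemma l33_sm_apply (μ : MeasureTheory.SignedMeasure ℝ) {i : Set ℝ} (hi : MeasurableSet i) :
    μ i = (μ.toJordanDecomposition.posPart i).toReal
        - (μ.toJordanDecomposition.negPart i).toReal := by
  conv_lhs => rw [← μ.toSignedMeasure_toJordanDecomposition]
  rw [MeasureTheory.JordanDecomposition.toSignedMeasure, MeasureTheory.VectorMeasure.sub_apply,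
    MeasureTheory.Measure.toSignedMeasure_apply_measurable hi,
    MeasureTheory.Measure.toSignedMeasure_apply_measurable hi]
  rfl

/-- value of a representing signed measure on Iic. -/
lemma l33_Iic_val {T : ℝ} (hT : 0 ≤ T) {A : ℝ → ℝ} {μ : MeasureTheory.SignedMeasure ℝ}
    (hμ : Represents T μ A) (c : ℝ) :
    μ (Set.Iic c) = if c < 0 then 0 else A (min c T) := by
  rcases lt_or_ge c 0 with hc | hc
  · rw [if_pos hc]
    refine hμ.2 _ measurableSet_Iic ?_
    ext y; simp only [Set.mem_inter_iff, Set.mem_Iic, Set.mem_Icc, Set.mem_empty_iff_false,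
      iff_false, not_and, and_imp]
    intro h1 h2; intro h3; linarith
  · rw [if_neg (not_lt.2 hc)]
    have hio : μ (Set.Iio 0) = 0 := by
      refine hμ.2 _ measurableSet_Iio ?_
      ext y; simp only [Set.mem_inter_iff, Set.mem_Iio, Set.mem_Icc, Set.mem_empty_iff_false,
        iff_false, not_and, and_imp]
      intro h1 h2; linarith
    rcases le_or_gt c T with hcT | hcT
    · rw [min_eq_left hcT]
      have hsplit : Set.Iic c = Set.Iio 0 ∪ Set.Icc 0 c := by
        ext y; simp only [Set.mem_Iic, Set.mem_union, Set.mem_Iio, Set.mem_Icc]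
        constructor
        · intro h; rcases lt_or_ge y 0 with h2 | h2
          · exact Or.inl h2
          · exact Or.inr ⟨h2, h⟩
        · rintro (h | ⟨h1, h2⟩)
          · linarith
          · exact h2
      rw [hsplit, MeasureTheory.VectorMeasure.of_union ?_ measurableSet_Iio measurableSet_Icc,
        hio, hμ.1 c ⟨hc, hcT⟩, zero_add]
      rw [Set.disjoint_iff]
      rintro y ⟨h1, h2, _⟩; exact absurd h2 (not_le.2 h1)
    · rw [min_eq_right hcT.le]
      have hioc : μ (Set.Ioc T c) = 0 := by
        refine hμ.2 _ measurableSet_Ioc ?_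
        ext y; simp only [Set.mem_inter_iff, Set.mem_Ioc, Set.mem_Icc, Set.mem_empty_iff_false,
          iff_false, not_and, and_imp]
        intro h1 h2 h3 h4; linarith
      have hsplit : Set.Iic c = (Set.Iio 0 ∪ Set.Icc 0 T) ∪ Set.Ioc T c := by
        ext y; simp only [Set.mem_Iic, Set.mem_union, Set.mem_Iio, Set.mem_Icc, Set.mem_Ioc]
        constructor
        · intro h; rcases lt_or_ge y 0 with h2 | h2
          · exact Or.inl (Or.inl h2)
          · rcases le_or_gt y T with h3 | h3
            · exact Or.inl (Or.inr ⟨h2, h3⟩)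
            · exact Or.inr ⟨h3, h⟩
        · rintro (h | ⟨h1, h2⟩)
          · rcases h with h | ⟨h1, h2⟩ <;> linarith
          · exact h2
      rw [hsplit, MeasureTheory.VectorMeasure.of_union ?_ (measurableSet_Iio.union
        measurableSet_Icc) measurableSet_Ioc,
        MeasureTheory.VectorMeasure.of_union ?_ measurableSet_Iio measurableSet_Icc,
        hio, hioc, hμ.1 T ⟨hT, le_rfl⟩, zero_add, add_zero]
      · rw [Set.disjoint_iff]; intro y hy
        simp only [Set.mem_inter_iff, Set.mem_union, Set.mem_Iio, Set.mem_Icc, Set.mem_Ioc,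
          Set.mem_empty_iff_false] at hy ⊢
        obtain ⟨h1, h2, h3⟩ := hy; linarith
      · rw [Set.disjoint_iff]; intro y hy
        simp only [Set.mem_inter_iff, Set.mem_union, Set.mem_Iio, Set.mem_Icc, Set.mem_Ioc,
          Set.mem_empty_iff_false] at hy ⊢
        obtain ⟨h1 | ⟨h1a, h1b⟩, h2, h3⟩ := hy <;> linarith

lemma l33_unique {T : ℝ} (hT : 0 ≤ T) {A : ℝ → ℝ} {μ ν : MeasureTheory.SignedMeasure ℝ}
    (hμ : Represents T μ A) (hν : Represents T ν A) : μ = ν := by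
  have hIic : ∀ c, μ (Set.Iic c) = ν (Set.Iic c) := by
    intro c; rw [l33_Iic_val hT hμ, l33_Iic_val hT hν]
  set P := μ.toJordanDecomposition.posPart + ν.toJordanDecomposition.negPart with hP
  set Q := ν.toJordanDecomposition.posPart + μ.toJordanDecomposition.negPart with hQ
  have hPQ : P = Q := by
    refine MeasureTheory.Measure.ext_of_Iic P Q fun c => ?_
    have h1 := hIic c
    rw [l33_sm_apply μ measurableSet_Iic, l33_sm_apply ν measurableSet_Iic] at h1
    have e1 : (μ.toJordanDecomposition.posPart (Set.Iic c)).toReal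
        + (ν.toJordanDecomposition.negPart (Set.Iic c)).toReal
        = (ν.toJordanDecomposition.posPart (Set.Iic c)).toReal
        + (μ.toJordanDecomposition.negPart (Set.Iic c)).toReal := by linarith
    have hne : ∀ (ρ : MeasureTheory.Measure ℝ) [MeasureTheory.IsFiniteMeasure ρ],
        ρ (Set.Iic c) ≠ ⊤ := fun ρ _ => MeasureTheory.measure_ne_top ρ _
    rw [MeasureTheory.Measure.add_apply, MeasureTheory.Measure.add_apply,
      ← ENNReal.toReal_eq_toReal_iff' (by finiteness) (by finiteness),
      ENNReal.toReal_add (by finiteness) (by finiteness),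
      ENNReal.toReal_add (by finiteness) (by finiteness)]
    exact e1
  refine MeasureTheory.VectorMeasure.ext fun i hi => ?_
  have h2 : P i = Q i := by rw [hPQ]
  rw [MeasureTheory.Measure.add_apply, MeasureTheory.Measure.add_apply] at h2
  have h3 : (μ.toJordanDecomposition.posPart i).toReal
      + (ν.toJordanDecomposition.negPart i).toReal
      = (ν.toJordanDecomposition.posPart i).toReal
      + (μ.toJordanDecomposition.negPart i).toReal := by
    rw [← ENNReal.toReal_add (by finiteness) (by finiteness),
      ← ENNReal.toReal_add (by finiteness) (by finiteness), h2]
  rw [l33_sm_apply μ hi, l33_sm_apply ν hi]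
  linarith

lemma l33_sInt_eq (P Q : MeasureTheory.Measure ℝ) [MeasureTheory.IsFiniteMeasure P]
    [MeasureTheory.IsFiniteMeasure Q] (hPQ : P ⟂ₘ Q) (f : ℝ → ℝ) :
    sInt (P.toSignedMeasure - Q.toSignedMeasure) f = (∫ t, f t ∂P) - ∫ t, f t ∂Q := by
  set j : MeasureTheory.JordanDecomposition ℝ := ⟨P, Q, hPQ⟩ with hj
  have h1 : j.toSignedMeasure = P.toSignedMeasure - Q.toSignedMeasure := rfl
  have h2 : (P.toSignedMeasure - Q.toSignedMeasure).toJordanDecomposition = j := by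
    rw [← h1, MeasureTheory.JordanDecomposition.toJordanDecomposition_toSignedMeasure]
  rw [sInt, h2]

lemma l33_intD_eq {T : ℝ} (hT : 0 ≤ T) (A f : ℝ → ℝ) (μ : MeasureTheory.SignedMeasure ℝ)
    (hμ : Represents T μ A) : intD T f A = sInt μ f := by
  rw [intD]
  have hex : ∃ ρ : MeasureTheory.SignedMeasure ℝ, Represents T ρ A := ⟨μ, hμ⟩
  rw [dif_pos hex]
  rw [l33_unique hT hex.choose_spec hμ]


set_option maxHeartbeats 2000000 in
/-- Lemma 3.3. -/
theorem stmt2 (T : ℝ) (hT : 0 < T) (x : ℝ → ℝ) (hx : Cadlag T x) (a b : ℝ) (hab : a < b)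
    (N : ℕ) (hN2 : 2 ≤ N) (hNhas : HasUpcrossings T a b x N)
    (hNmax : ¬ HasUpcrossings T a b x (N + 1)) :
    ∃ A : ℝ → ℝ, MemA T A ∧
      (b - a) ≤ intD T x A ∧
      eVariationOn A (Set.Icc 0 T) = (2 : ENNReal) ∧
      sSup {r : ℝ | ∃ t ∈ Set.Icc (0:ℝ) T, r = |A t|} = 1 / ((N : ℝ) - 1) := by
  classical
  obtain ⟨s, u, hsu, hord, hcross⟩ := hNhas
  have hN0 : 0 < N := by omega
  have hNe : Nonempty (Fin N) := ⟨⟨0, hN0⟩⟩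
  set n : ℕ := N - 1 with hn
  have hn1 : 1 ≤ n := by omega
  have hu_mono : ∀ i j : Fin N, i ≤ j → u i ≤ u j := by
    intro i j hij
    rcases eq_or_lt_of_le hij with h | h
    · rw [h]
    · exact le_of_lt (lt_trans (hord i j h) (hsu j).2.1)
  have hs_mono : ∀ i j : Fin N, i ≤ j → s i ≤ s j := by
    intro i j hij
    rcases eq_or_lt_of_le hij with h | h
    · rw [h]
    · exact le_of_lt (lt_trans (hsu i).2.1 (hord i j h))
  have hsT : ∀ j : Fin N, s j < T := fun j => lt_of_lt_of_le (hsu j).2.1 (hsu j).2.2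
  -- choose per-crossing deltas
  have key : ∀ j : Fin N, ∃ d : ℝ, 0 < d ∧ d ≤ u j - s j ∧
      (∀ jj : Fin N, (j:ℕ)+1 = (jj:ℕ) → 2*d ≤ s jj - u j) ∧
      ((j:ℕ)+1 < N → ∀ t, u j ≤ t → t < u j + d → b < x t ∧ x t < x (u j) + 1) ∧
      (∀ t, s j ≤ t → t < s j + d → x t < a ∧ x (s j) - 1 < x t) := by
    intro j
    -- right-continuity at s j
    have hs0 : (0:ℝ) ≤ s j := (hsu j).1
    have hsx : x (s j) < a := (hcross j).1
    have h2 : ∀ᶠ t in nhdsWithin (s j) (Set.Ioi (s j)), x t ∈ Set.Ioo (x (s j) - 1) a :=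
      (hx.1 (s j) ⟨hs0, hsT j⟩).eventually (isOpen_Ioo.mem_nhds ⟨by linarith, hsx⟩)
    rw [eventually_iff, mem_nhdsGT_iff_exists_Ioo_subset] at h2
    obtain ⟨v₂, hv₂, hsub₂⟩ := h2
    rw [Set.mem_Ioi] at hv₂
    by_cases hjN : (j:ℕ)+1 < N
    · set jj : Fin N := ⟨(j:ℕ)+1, hjN⟩ with hjj
      have hjlt : j < jj := by rw [Fin.lt_def]; simp [hjj]
      have g1 : u j < s jj := hord j jj hjlt
      have huT : u j < T := lt_of_lt_of_le (lt_trans g1 (hsu jj).2.1) (hsu jj).2.2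
      have hu0 : (0:ℝ) ≤ u j := le_trans hs0 (hsu j).2.1.le
      have hbx : b < x (u j) := (hcross j).2
      have h1 : ∀ᶠ t in nhdsWithin (u j) (Set.Ioi (u j)), x t ∈ Set.Ioo b (x (u j) + 1) :=
        (hx.1 (u j) ⟨hu0, huT⟩).eventually (isOpen_Ioo.mem_nhds ⟨hbx, by linarith⟩)
      rw [eventually_iff, mem_nhdsGT_iff_exists_Ioo_subset] at h1
      obtain ⟨v₁, hv₁, hsub₁⟩ := h1
      rw [Set.mem_Ioi] at hv₁
      refine ⟨min (min (u j - s j) ((s jj - u j)/2)) (min (v₁ - u j) (v₂ - s j)),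
        ?_, ?_, ?_, ?_, ?_⟩
      · have := (hsu j).2.1
        refine lt_min (lt_min (by linarith) (by linarith)) (lt_min (by linarith) (by linarith))
      · exact le_trans (min_le_left _ _) (min_le_left _ _)
      · intro jj' hjj'
        have heq : jj' = jj := Fin.ext hjj'.symm
        rw [heq]
        have h3 : min (min (u j - s j) ((s jj - u j)/2)) (min (v₁ - u j) (v₂ - s j))
            ≤ (s jj - u j)/2 := le_trans (min_le_left _ _) (min_le_right _ _)
        linarith
      · intro _ t ht1 ht2
        rcases eq_or_lt_of_le ht1 with h | h
        · rw [← h]; exact ⟨hbx, by linarith⟩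
        · have h4 : t < v₁ := by
            have : min (min (u j - s j) ((s jj - u j)/2)) (min (v₁ - u j) (v₂ - s j))
                ≤ v₁ - u j := le_trans (min_le_right _ _) (min_le_left _ _)
            linarith
          exact hsub₁ ⟨h, h4⟩
      · intro t ht1 ht2
        rcases eq_or_lt_of_le ht1 with h | h
        · rw [← h]; exact ⟨hsx, by linarith⟩
        · have h4 : t < v₂ := by
            have : min (min (u j - s j) ((s jj - u j)/2)) (min (v₁ - u j) (v₂ - s j))
                ≤ v₂ - s j := le_trans (min_le_right _ _) (min_le_right _ _)
            linarith
          have h5 := hsub₂ ⟨h, h4⟩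
          exact ⟨h5.2, h5.1⟩
    · refine ⟨min (u j - s j) (v₂ - s j), ?_, min_le_left _ _, ?_, ?_, ?_⟩
      · have := (hsu j).2.1
        exact lt_min (by linarith) (by linarith)
      · intro jj' hjj'
        exact absurd hjj' (by have := jj'.isLt; omega)
      · intro h; exact absurd h hjN
      · intro t ht1 ht2
        rcases eq_or_lt_of_le ht1 with h | h
        · rw [← h]; exact ⟨hsx, by linarith⟩
        · have h4 : t < v₂ := by
            have : min (u j - s j) (v₂ - s j) ≤ v₂ - s j := min_le_right _ _
            linarith
          have h5 := hsub₂ ⟨h, h4⟩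
          exact ⟨h5.2, h5.1⟩
  choose d hd0 hd1 hd2 hd3 hd4 using key
  set δ : ℝ := Finset.univ.inf' Finset.univ_nonempty d with hδdef
  have hδ0 : 0 < δ := by
    rw [hδdef, Finset.lt_inf'_iff]
    exact fun j _ => hd0 j
  have hδle : ∀ j, δ ≤ d j := fun j => Finset.inf'_le d (Finset.mem_univ j)
  -- index maps
  have hnN : n - 1 < N := by omega
  have hnN2 : ∀ i : ℕ, min i (n-1) + 1 < N := by intro i; omega
  set J : ℕ → Fin N := fun i => ⟨min i (n-1), by omega⟩ with hJdef
  set J1 : ℕ → Fin N := fun i => ⟨min i (n-1) + 1, hnN2 i⟩ with hJ1def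
  set p : ℕ → ℝ := fun i => u (J i) with hpdef
  set q : ℕ → ℝ := fun i => s (J1 i) with hqdef
  have hJcoe : ∀ i, (J i : ℕ) = min i (n-1) := fun i => rfl
  have hJ1coe : ∀ i, (J1 i : ℕ) = min i (n-1) + 1 := fun i => rfl
  have hpq : ∀ i, p i + 2*δ ≤ q i := by
    intro i
    have h := hd2 (J i) (J1 i) (by rw [hJcoe, hJ1coe])
    have h2 := hδle (J i)
    simp only [hpdef, hqdef]; linarith
  have hq_le : ∀ i, q i + δ ≤ u (J1 i) := by
    intro i
    have h := hd1 (J1 i)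
    have h2 := hδle (J1 i)
    simp only [hqdef]; linarith
  have hqT : ∀ i, q i + δ ≤ T := fun i => le_trans (hq_le i) (hsu (J1 i)).2.2
  have hqp : ∀ i, i + 1 < n → q i + δ ≤ p (i+1) := by
    intro i hi
    have hJJ : J (i+1) = J1 i := by
      apply Fin.ext; rw [hJcoe, hJ1coe]; omega
    calc q i + δ ≤ u (J1 i) := hq_le i
      _ = u (J (i+1)) := by rw [hJJ]
      _ = p (i+1) := rfl
  have hp0 : ∀ i, 0 ≤ p i :=
    fun i => le_of_lt (lt_of_le_of_lt (hsu (J i)).1 (hsu (J i)).2.1)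
  have hpmono : ∀ i k, i ≤ k → p i ≤ p k := by
    intro i k hik
    exact hu_mono _ _ (by rw [Fin.le_def, hJcoe, hJcoe]; omega)
  have hqmono : ∀ i k, i ≤ k → q i ≤ q k := by
    intro i k hik
    exact hs_mono _ _ (by rw [Fin.le_def, hJ1coe, hJ1coe]; omega)
  have hpiq : ∀ i k, i ≤ k → p i + δ ≤ q k := by
    intro i k hik
    have := hpmono i k hik
    have := hpq k
    linarith
  have hqip : ∀ i k, i < k → k < n → q i + δ ≤ p k := by
    intro i k hik hkn
    have h1 := hqmono i (k-1) (by omega)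
    have h2 := hqp (k-1) (by omega)
    have h3 : k - 1 + 1 = k := by omega
    rw [h3] at h2
    linarith
  have hpT : ∀ i, p i + δ ≤ T := by
    intro i
    have := hpq i
    have := hqT i
    linarith
  have hxb : ∀ i t, p i ≤ t → t < p i + δ → b < x t ∧ x t < x (p i) + 1 := by
    intro i t h1 h2
    have hg : (J i : ℕ) + 1 < N := by rw [hJcoe]; omega
    have := hδle (J i)
    exact hd3 (J i) hg t h1 (by simp only [hpdef] at h2 ⊢; linarith)
  have hxa : ∀ i t, q i ≤ t → t < q i + δ → x t < a ∧ x (q i) - 1 < x t := by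
    intro i t h1 h2
    have := hδle (J1 i)
    exact hd4 (J1 i) t h1 (by simp only [hqdef] at h2 ⊢; linarith)
  -- the function A
  set c : ℝ := 1 / ((N : ℝ) - 1) with hcdef
  have hNr : ((N:ℝ) - 1) = (n:ℝ) := by
    rw [hn, Nat.cast_sub (by omega)]; norm_num
  have hnr0 : (0:ℝ) < (n:ℝ) := by exact_mod_cast hn1
  have hc0 : 0 < c := by rw [hcdef, hNr]; positivity
  have hnc : (n:ℝ) * c = 1 := by rw [hcdef, hNr]; field_simp
  set A : ℝ → ℝ := fun t =>
    ∑ i ∈ Finset.range n, (c/δ) * (l33ramp δ (p i) t - l33ramp δ (q i) t) with hAdef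
  -- basic values of A
  have hq0 : ∀ i, 0 ≤ q i := fun i => by have := hpq i; have := hp0 i; linarith
  have hAzero : ∀ t, (∀ m, m < n → q m + δ ≤ t ∨ t ≤ p m) → A t = 0 := by
    intro t ht
    simp only [hAdef]
    apply Finset.sum_eq_zero
    intro m hm
    rcases ht m (Finset.mem_range.1 hm) with h | h
    · rw [l33ramp_of_ge hδ0.le (by linarith [hpq m]), l33ramp_of_ge hδ0.le (by linarith)]
      ring
    · rw [l33ramp_of_le hδ0.le h, l33ramp_of_le hδ0.le (by linarith [hpq m])]
      ring
  have hA0 : A 0 = 0 := hAzero 0 (fun m _ => Or.inr (hp0 m))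
  have hAT : A T = 0 := hAzero T (fun m hm => Or.inl (hqT m))
  have hAq : ∀ i, i < n → A (q i + δ) = 0 := by
    intro i hi
    apply hAzero
    intro m hm
    rcases le_or_gt m i with h | h
    · left
      have := hqmono m i h
      linarith
    · right
      exact hqip i m h hm
  have hAp : ∀ i, i < n → A (p i + δ) = c := by
    intro i hi
    simp only [hAdef]
    rw [Finset.sum_eq_single i]
    · rw [l33ramp_of_ge hδ0.le le_rfl, l33ramp_of_le hδ0.le (by linarith [hpq i]), sub_zero]
      field_simp
    · intro m hm hmi
      have hmn := Finset.mem_range.1 hm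
      rcases lt_or_gt_of_ne hmi with h | h
      · have h1 : q m + δ ≤ p i := hqip m i h hi
        rw [l33ramp_of_ge hδ0.le (by linarith [hpiq m i h.le, hpq m]),
          l33ramp_of_ge hδ0.le (by linarith)]
        ring
      · have h2 : p i + δ ≤ p m := by linarith [hqip i m h hmn, hpq i]
        rw [l33ramp_of_le hδ0.le (by linarith),
          l33ramp_of_le hδ0.le (by linarith [hpq m])]
        ring
    · intro hi2
      exact absurd (Finset.mem_range.2 hi) hi2
  -- single term vanishing
  have hterm0 : ∀ m t, (t ≤ p m ∨ q m + δ ≤ t) →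
      (c/δ) * (l33ramp δ (p m) t - l33ramp δ (q m) t) = 0 := by
    intro m t h
    rcases h with h | h
    · rw [l33ramp_of_le hδ0.le h, l33ramp_of_le hδ0.le (by linarith [hpq m])]; ring
    · rw [l33ramp_of_ge hδ0.le (by linarith [hpq m]), l33ramp_of_ge hδ0.le (by linarith)]; ring
  -- range of A
  have hcδ : 0 ≤ c/δ := by positivity
  have hArange : ∀ t, 0 ≤ A t ∧ A t ≤ c := by
    intro t
    constructor
    · simp only [hAdef]
      apply Finset.sum_nonneg
      intro m hm
      have h1 : l33ramp δ (q m) t ≤ l33ramp δ (p m) t :=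
        l33ramp_anti (by linarith [hpq m]) t
      exact mul_nonneg hcδ (by linarith)
    · by_cases hex : ∃ m ∈ Finset.range n,
          (c/δ) * (l33ramp δ (p m) t - l33ramp δ (q m) t) ≠ 0
      · obtain ⟨m₀, hm₀, hne⟩ := hex
        have hm₀n := Finset.mem_range.1 hm₀
        have hwin : p m₀ < t ∧ t < q m₀ + δ := by
          by_contra hcon
          apply hne
          apply hterm0
          rcases lt_or_ge (p m₀) t with h | h
          · rcases lt_or_ge t (q m₀ + δ) with h2 | h2
            · exact absurd ⟨h, h2⟩ hcon
            · exact Or.inr h2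
          · exact Or.inl h
        have : A t = (c/δ) * (l33ramp δ (p m₀) t - l33ramp δ (q m₀) t) := by
          simp only [hAdef]
          apply Finset.sum_eq_single_of_mem m₀ hm₀
          intro m hm hmm
          have hmn := Finset.mem_range.1 hm
          apply hterm0
          rcases lt_or_gt_of_ne hmm with h | h
          · right; linarith [hqip m m₀ h hm₀n, hwin.1]
          · left; linarith [hqip m₀ m h hmn, hwin.2]
        rw [this]
        calc (c/δ) * (l33ramp δ (p m₀) t - l33ramp δ (q m₀) t) ≤ (c/δ) * δ :=
              mul_le_mul_of_nonneg_left
                (by linarith [l33ramp_le δ (p m₀) t, l33ramp_nonneg hδ0.le (q m₀) t]) hcδ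
          _ = c := by field_simp
      · push_neg at hex
        have : A t = 0 := by
          simp only [hAdef]
          apply Finset.sum_eq_zero
          intro m hm
          by_contra hcon
          exact hcon (hex m hm)
        rw [this]; exact hc0.le
  -- monotonicity on pieces
  have hmono : ∀ L R : ℝ, (∀ m, m < n → R ≤ q m ∨ q m + δ ≤ L) →
      MonotoneOn A (Set.Icc L R) := by
    intro L R hLR t1 h1 t2 h2 h12
    simp only [hAdef]
    apply Finset.sum_le_sum
    intro m hm
    rcases hLR m (Finset.mem_range.1 hm) with h | h
    · rw [l33ramp_of_le hδ0.le (le_trans h1.2 h), l33ramp_of_le hδ0.le (le_trans h2.2 h)]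
      have h3 := l33ramp_mono δ (p m) h12
      exact mul_le_mul_of_nonneg_left (by linarith) hcδ
    · have hqm : q m + δ ≤ t1 := le_trans h h1.1
      have hqm2 : q m + δ ≤ t2 := le_trans hqm h12
      rw [l33ramp_of_ge (p := p m) (t := t1) hδ0.le (by linarith [hpq m]),
        l33ramp_of_ge (p := p m) (t := t2) hδ0.le (by linarith [hpq m]),
        l33ramp_of_ge (p := q m) (t := t1) hδ0.le (by linarith),
        l33ramp_of_ge (p := q m) (t := t2) hδ0.le (by linarith)]
  have hanti : ∀ L R : ℝ, (∀ m, m < n → R ≤ p m ∨ p m + δ ≤ L) →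
      AntitoneOn A (Set.Icc L R) := by
    intro L R hLR t1 h1 t2 h2 h12
    simp only [hAdef]
    apply Finset.sum_le_sum
    intro m hm
    rcases hLR m (Finset.mem_range.1 hm) with h | h
    · rw [l33ramp_of_le (p := p m) (t := t1) hδ0.le (le_trans h1.2 h),
        l33ramp_of_le (p := p m) (t := t2) hδ0.le (le_trans h2.2 h),
        l33ramp_of_le (p := q m) (t := t2) hδ0.le (by linarith [hpq m, le_trans h2.2 h]),
        l33ramp_of_le (p := q m) (t := t1) hδ0.le (by linarith [hpq m, le_trans h1.2 h])]
    · have hp1 : p m + δ ≤ t1 := le_trans h h1.1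
      have hp2 : p m + δ ≤ t2 := le_trans hp1 h12
      rw [l33ramp_of_ge hδ0.le hp1, l33ramp_of_ge hδ0.le hp2]
      have h3 := l33ramp_mono δ (q m) h12
      exact mul_le_mul_of_nonneg_left (by linarith) hcδ
  -- partition points
  set Qq : ℕ → ℝ := fun i => if i = 0 then 0 else q (i-1) + δ with hQdef
  have hQ0 : ∀ i, 0 ≤ Qq i := by
    intro i
    simp only [hQdef]
    split
    · exact le_rfl
    · have := hq0 (i-1); linarith [hδ0]
  have hQle : ∀ i, Qq i ≤ T := by
    intro i
    simp only [hQdef]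
    split
    · exact hT.le
    · exact hqT (i-1)
  have hQp : ∀ i, i < n → Qq i ≤ p i + δ := by
    intro i hi
    simp only [hQdef]
    split
    · have := hp0 i; linarith
    · next hi0 =>
      have h2 := hqp (i-1) (by omega)
      have h3 : i - 1 + 1 = i := by omega
      rw [h3] at h2
      linarith
  have hAQ : ∀ i, i ≤ n → A (Qq i) = 0 := by
    intro i hi
    simp only [hQdef]
    split
    · exact hA0
    · next hi0 => exact hAq (i-1) (by omega)
  -- variation up to Qq i
  have claim : ∀ i, i ≤ n →
      eVariationOn A (Set.Icc 0 (Qq i)) = ENNReal.ofReal (i * (2*c)) := by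
    intro i
    induction i with
    | zero =>
      intro _
      have : Qq 0 = 0 := by simp [hQdef]
      rw [this, Set.Icc_self]
      rw [eVariationOn.subsingleton A (Set.subsingleton_singleton)]
      norm_num
    | succ i ih =>
      intro hi
      have hin : i < n := by omega
      have hL0 : 0 ≤ Qq i := hQ0 i
      have hLM1 : Qq i ≤ p i + δ := hQp i hin
      have hM12 : p i + δ ≤ q i + δ := by linarith [hpq i]
      have hQsucc : Qq (i+1) = q i + δ := by simp [hQdef]
      have hAL : A (Qq i) = 0 := hAQ i (by omega)
      have hAM1 : A (p i + δ) = c := hAp i hin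
      have hAM2 : A (q i + δ) = 0 := hAq i hin
      -- piece [Qq i, p i + δ]
      have piece1 : eVariationOn A (Set.Icc (Qq i) (p i + δ)) = ENNReal.ofReal c := by
        have hmm : MonotoneOn A (Set.Icc (Qq i) (p i + δ)) := by
          apply hmono
          intro m hm
          rcases lt_or_ge m i with h | h
          · right
            simp only [hQdef, if_neg (by omega : ¬ i = 0)]
            have := hqmono m (i-1) (by omega)
            linarith
          · left
            exact hpiq i m h
        apply le_antisymm
        · have h5 := hmm.eVariationOn_le (Set.left_mem_Icc.2 hLM1) (Set.right_mem_Icc.2 hLM1)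
          rw [Set.inter_self] at h5
          rw [hAM1, hAL, sub_zero] at h5
          exact h5
        · have h6 := eVariationOn.edist_le A (Set.right_mem_Icc.2 hLM1)
            (Set.left_mem_Icc.2 hLM1)
          rw [hAM1, hAL, edist_dist, Real.dist_eq, sub_zero, abs_of_pos hc0] at h6
          exact h6
      have piece2 : eVariationOn A (Set.Icc (p i + δ) (q i + δ)) = ENNReal.ofReal c := by
        have hmm : AntitoneOn A (Set.Icc (p i + δ) (q i + δ)) := by
          apply hanti
          intro m hm
          rcases lt_or_ge m i with h | h
          · right
            have := hpmono m i h.le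
            linarith
          · rcases eq_or_lt_of_le h with h2 | h2
            · right; rw [← h2]
            · left
              exact hqip i m h2 hm
        apply le_antisymm
        · have h5 := l33_anti_evar hmm (Set.left_mem_Icc.2 hM12) (Set.right_mem_Icc.2 hM12)
          rw [Set.inter_self] at h5
          rw [hAM1, hAM2, sub_zero] at h5
          exact h5
        · have h6 := eVariationOn.edist_le A (Set.right_mem_Icc.2 hM12)
            (Set.left_mem_Icc.2 hM12)
          rw [hAM1, hAM2, edist_dist, Real.dist_eq, zero_sub, abs_neg, abs_of_pos hc0] at h6
          exact h6
      have split1 := eVariationOn.Icc_add_Icc A (a := 0) (b := Qq i) (c := p i + δ)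
        (s := Set.Icc 0 (p i + δ)) hL0 hLM1 ⟨hL0, hLM1⟩
      rw [Set.Icc_inter_Icc, Set.Icc_inter_Icc, Set.Icc_inter_Icc] at split1
      simp only [sup_idem, sup_of_le_right hL0, inf_of_le_right hLM1, inf_idem] at split1
      have split2 := eVariationOn.Icc_add_Icc A (a := 0) (b := p i + δ) (c := q i + δ)
        (s := Set.Icc 0 (q i + δ)) (by linarith) hM12 ⟨by linarith, hM12⟩
      rw [Set.Icc_inter_Icc, Set.Icc_inter_Icc, Set.Icc_inter_Icc] at split2
      simp only [sup_idem, sup_of_le_right (by linarith : (0:ℝ) ≤ p i + δ),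
        inf_of_le_right hM12, inf_idem] at split2
      rw [hQsucc, ← split2, ← split1, ih (by omega), piece1, piece2]
      rw [← ENNReal.ofReal_add (by positivity) hc0.le,
        ← ENNReal.ofReal_add (by positivity) hc0.le]
      congr 1
      push_cast
      ring
  -- total variation
  have hQn : Qq n = q (n-1) + δ := by
    simp only [hQdef]; rw [if_neg (by omega)]
  have heVar : eVariationOn A (Set.Icc 0 T) = (2 : ENNReal) := by
    have hQnT : Qq n ≤ T := hQle n
    have split3 := eVariationOn.Icc_add_Icc A (a := 0) (b := Qq n) (c := T)
      (s := Set.Icc 0 T) (hQ0 n) hQnT ⟨hQ0 n, hQnT⟩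
    rw [Set.Icc_inter_Icc, Set.Icc_inter_Icc, Set.Icc_inter_Icc] at split3
    simp only [sup_idem, sup_of_le_right (hQ0 n), inf_of_le_right hQnT, inf_idem] at split3
    have hconst : eVariationOn A (Set.Icc (Qq n) T) = 0 := by
      apply eVariationOn.constant_on
      intro y hy z hz
      obtain ⟨t1, ht1, rfl⟩ := hy
      obtain ⟨t2, ht2, rfl⟩ := hz
      have hz1 : A t1 = 0 := by
        apply hAzero
        intro m hm
        left
        have := hqmono m (n-1) (by omega)
        rw [hQn] at ht1
        linarith [ht1.1]
      have hz2 : A t2 = 0 := by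
        apply hAzero
        intro m hm
        left
        have := hqmono m (n-1) (by omega)
        rw [hQn] at ht2
        linarith [ht2.1]
      rw [hz1, hz2]
    rw [← split3, hconst, add_zero, claim n le_rfl]
    rw [show (n:ℝ) * (2*c) = 2 by rw [show (n:ℝ)*(2*c) = 2*((n:ℝ)*c) by ring, hnc]; ring]
    norm_num
  have hBV : BoundedVariationOn A (Set.Icc 0 T) := by
    rw [BoundedVariationOn, heVar]
    exact ENNReal.ofNat_ne_top
  have hAcont : Continuous A := by
    simp only [hAdef]
    exact continuous_finset_sum _ fun i _ =>
      continuous_const.mul ((l33ramp_cont δ (p i)).sub (l33ramp_cont δ (q i)))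
  -- sSup
  have hssup : sSup {r : ℝ | ∃ t ∈ Set.Icc (0:ℝ) T, r = |A t|} = c := by
    have hmem : c ∈ {r : ℝ | ∃ t ∈ Set.Icc (0:ℝ) T, r = |A t|} := by
      refine ⟨p 0 + δ, ⟨by linarith [hp0 0], hpT 0⟩, ?_⟩
      rw [hAp 0 (by omega), abs_of_pos hc0]
    have hub : ∀ r ∈ {r : ℝ | ∃ t ∈ Set.Icc (0:ℝ) T, r = |A t|}, r ≤ c := by
      rintro r ⟨t, ht, rfl⟩
      rw [abs_of_nonneg (hArange t).1]
      exact (hArange t).2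
    exact le_antisymm (csSup_le ⟨c, hmem⟩ hub) (le_csSup ⟨c, hub⟩ hmem)
  -- integrability and integral bounds on small intervals
  have hint : ∀ (r C1 C2 : ℝ), 0 ≤ r → r + δ ≤ T →
      (∀ t, r ≤ t → t < r + δ → C1 < x t ∧ x t < C2) →
      Integrable x (volume.restrict (Set.Ico r (r+δ))) ∧
      C1 * δ ≤ (∫ t, x t ∂(volume.restrict (Set.Ico r (r+δ)))) ∧
      (∫ t, x t ∂(volume.restrict (Set.Ico r (r+δ)))) ≤ C2 * δ := by
    intro r C1 C2 hr hrT hbound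
    have hmeas : MeasurableSet (Set.Ico r (r+δ)) := measurableSet_Ico
    have hsub : Set.Ico r (r+δ) ⊆ Set.Ico 0 T := fun t ht =>
      ⟨le_trans hr ht.1, lt_of_lt_of_le ht.2 hrT⟩
    have hae := l33_aemeas x hx.1 hmeas hsub
    have hvol : (volume.restrict (Set.Ico r (r+δ))) Set.univ = ENNReal.ofReal δ := by
      rw [MeasureTheory.Measure.restrict_apply_univ, Real.volume_Ico, add_sub_cancel_left]
    haveI : IsFiniteMeasure (volume.restrict (Set.Ico r (r+δ))) :=
      ⟨by rw [hvol]; exact ENNReal.ofReal_lt_top⟩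
    have hxle : ∀ᵐ t ∂(volume.restrict (Set.Ico r (r+δ))), C1 ≤ x t ∧ x t ≤ C2 := by
      filter_upwards [ae_restrict_mem hmeas] with t ht
      exact ⟨(hbound t ht.1 ht.2).1.le, (hbound t ht.1 ht.2).2.le⟩
    have hInt : Integrable x (volume.restrict (Set.Ico r (r+δ))) := by
      refine Integrable.mono' (integrable_const (max |C1| |C2|)) hae.aestronglyMeasurable ?_
      filter_upwards [hxle] with t ht
      rw [Real.norm_eq_abs, abs_le]
      constructor
      · calc -(max |C1| |C2|) ≤ -|C1| := neg_le_neg (le_max_left _ _)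
          _ ≤ C1 := neg_abs_le C1
          _ ≤ x t := ht.1
      · exact le_trans ht.2 (le_trans (le_abs_self C2) (le_max_right _ _))
    refine ⟨hInt, ?_, ?_⟩
    · have h7 := integral_mono_ae (integrable_const C1) hInt (hxle.mono fun t ht => ht.1)
      rwa [MeasureTheory.integral_const, measureReal_def, hvol, ENNReal.toReal_ofReal hδ0.le,
        smul_eq_mul, mul_comm] at h7
    · have h7 := integral_mono_ae hInt (integrable_const C2) (hxle.mono fun t ht => ht.2)
      rwa [MeasureTheory.integral_const, measureReal_def, hvol, ENNReal.toReal_ofReal hδ0.le,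
        smul_eq_mul, mul_comm] at h7
  have hintp := fun i => hint (p i) b (x (p i) + 1) (hp0 i) (hpT i) (hxb i)
  have hintq := fun i => hint (q i) (x (q i) - 1) a (hq0 i) (hqT i) (fun t h1 h2 => ⟨(hxa i t h1 h2).2, (hxa i t h1 h2).1⟩)
  -- the measures
  set ρ : ℕ → MeasureTheory.Measure ℝ := fun i =>
    (ENNReal.ofReal (c/δ)) • (volume.restrict (Set.Ico (p i) (p i + δ))) with hρdef
  set σm : ℕ → MeasureTheory.Measure ℝ := fun i =>
    (ENNReal.ofReal (c/δ)) • (volume.restrict (Set.Ico (q i) (q i + δ))) with hσdef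
  set P : MeasureTheory.Measure ℝ := ∑ i ∈ Finset.range n, ρ i with hPdef
  set Qm : MeasureTheory.Measure ℝ := ∑ i ∈ Finset.range n, σm i with hQmdef
  have hρapp : ∀ i (E : Set ℝ), MeasurableSet E →
      ρ i E = ENNReal.ofReal (c/δ) * volume (E ∩ Set.Ico (p i) (p i + δ)) := by
    intro i E hE
    simp only [hρdef]
    rw [MeasureTheory.Measure.smul_apply, MeasureTheory.Measure.restrict_apply hE,
      smul_eq_mul]
  have hσapp : ∀ i (E : Set ℝ), MeasurableSet E →
      σm i E = ENNReal.ofReal (c/δ) * volume (E ∩ Set.Ico (q i) (q i + δ)) := by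
    intro i E hE
    simp only [hσdef]
    rw [MeasureTheory.Measure.smul_apply, MeasureTheory.Measure.restrict_apply hE,
      smul_eq_mul]
  have hPapp : ∀ (E : Set ℝ), MeasurableSet E →
      P E = ∑ i ∈ Finset.range n,
        ENNReal.ofReal (c/δ) * volume (E ∩ Set.Ico (p i) (p i + δ)) := by
    intro E hE
    rw [hPdef, MeasureTheory.Measure.finset_sum_apply]
    exact Finset.sum_congr rfl fun i _ => hρapp i E hE
  have hQmapp : ∀ (E : Set ℝ), MeasurableSet E →
      Qm E = ∑ i ∈ Finset.range n,
        ENNReal.ofReal (c/δ) * volume (E ∩ Set.Ico (q i) (q i + δ)) := by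
    intro E hE
    rw [hQmdef, MeasureTheory.Measure.finset_sum_apply]
    exact Finset.sum_congr rfl fun i _ => hσapp i E hE
  have hterm_ne : ∀ (E : Set ℝ) (r : ℝ),
      ENNReal.ofReal (c/δ) * volume (E ∩ Set.Ico r (r + δ)) ≠ ⊤ := by
    intro E r
    apply ENNReal.mul_ne_top ENNReal.ofReal_ne_top
    exact ne_top_of_le_ne_top (by rw [Real.volume_Ico]; exact ENNReal.ofReal_ne_top)
      (measure_mono Set.inter_subset_right)
  haveI hPfin : IsFiniteMeasure P := by
    constructor
    rw [hPapp Set.univ MeasurableSet.univ]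
    rw [ENNReal.sum_lt_top]
    exact fun i _ => lt_top_iff_ne_top.2 (hterm_ne _ _)
  haveI hQmfin : IsFiniteMeasure Qm := by
    constructor
    rw [hQmapp Set.univ MeasurableSet.univ]
    rw [ENNReal.sum_lt_top]
    exact fun i _ => lt_top_iff_ne_top.2 (hterm_ne _ _)
  -- mutual singularity
  have hsing : P ⟂ₘ Qm := by
    refine ⟨⋃ j ∈ Finset.range n, Set.Ico (q j) (q j + δ),
      Finset.measurableSet_biUnion _ (fun j _ => measurableSet_Ico), ?_, ?_⟩
    · rw [hPapp _ (Finset.measurableSet_biUnion _ (fun j _ => measurableSet_Ico))]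
      apply Finset.sum_eq_zero
      intro i hi
      have hin := Finset.mem_range.1 hi
      have hempty : (⋃ j ∈ Finset.range n, Set.Ico (q j) (q j + δ))
          ∩ Set.Ico (p i) (p i + δ) = ∅ := by
        rw [Set.eq_empty_iff_forall_notMem]
        rintro t ⟨ht1, ht2⟩
        simp only [Set.mem_iUnion, Finset.mem_range, Set.mem_Ico] at ht1
        obtain ⟨j, hj, htj1, htj2⟩ := ht1
        rcases le_or_gt i j with h | h
        · have := hpiq i j h
          rw [Set.mem_Ico] at ht2
          linarith [ht2.2]
        · have := hqip j i h hin
          rw [Set.mem_Ico] at ht2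
          linarith [ht2.1]
      rw [hempty, measure_empty, mul_zero]
    · rw [hQmapp _ (Finset.measurableSet_biUnion _
        (fun j _ => measurableSet_Ico)).compl]
      apply Finset.sum_eq_zero
      intro i hi
      have hsub : Set.Ico (q i) (q i + δ) ⊆ ⋃ j ∈ Finset.range n, Set.Ico (q j) (q j + δ) :=
        fun t ht => Set.mem_biUnion hi ht
      have hempty : (⋃ j ∈ Finset.range n, Set.Ico (q j) (q j + δ))ᶜ
          ∩ Set.Ico (q i) (q i + δ) = ∅ := by
        rw [Set.eq_empty_iff_forall_notMem]
        rintro t ⟨ht1, ht2⟩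
        exact ht1 (hsub ht2)
      rw [hempty, measure_empty, mul_zero]
  -- the signed measure represents A
  have hIcoT : ∀ r, 0 ≤ r → r + δ ≤ T → Set.Ico r (r + δ) ⊆ Set.Icc 0 T := by
    intro r hr hrT t ht
    exact ⟨le_trans hr ht.1, le_trans ht.2.le hrT⟩
  have hrep : Represents T (P.toSignedMeasure - Qm.toSignedMeasure) A := by
    constructor
    · intro t ht
      rw [MeasureTheory.VectorMeasure.sub_apply,
        MeasureTheory.Measure.toSignedMeasure_apply_measurable measurableSet_Icc,
        MeasureTheory.Measure.toSignedMeasure_apply_measurable measurableSet_Icc,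
        measureReal_def, measureReal_def,
        hPapp _ measurableSet_Icc, hQmapp _ measurableSet_Icc,
        ENNReal.toReal_sum (fun i _ => hterm_ne _ _),
        ENNReal.toReal_sum (fun i _ => hterm_ne _ _)]
      have e1 : ∀ i, (ENNReal.ofReal (c/δ) * volume (Set.Icc 0 t ∩
          Set.Ico (p i) (p i + δ))).toReal = (c/δ) * l33ramp δ (p i) t := by
        intro i
        rw [l33_vol hδ0 (hp0 i) t, ← ENNReal.ofReal_mul hcδ,
          ENNReal.toReal_ofReal (mul_nonneg hcδ (l33ramp_nonneg hδ0.le _ _))]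
      have e2 : ∀ i, (ENNReal.ofReal (c/δ) * volume (Set.Icc 0 t ∩
          Set.Ico (q i) (q i + δ))).toReal = (c/δ) * l33ramp δ (q i) t := by
        intro i
        rw [l33_vol hδ0 (hq0 i) t, ← ENNReal.ofReal_mul hcδ,
          ENNReal.toReal_ofReal (mul_nonneg hcδ (l33ramp_nonneg hδ0.le _ _))]
      simp only [e1, e2]
      rw [← Finset.sum_sub_distrib]
      simp only [hAdef]
      exact Finset.sum_congr rfl fun i _ => by ring
    · intro E hE hdisj
      have hzero : ∀ r, 0 ≤ r → r + δ ≤ T → volume (E ∩ Set.Ico r (r + δ)) = 0 := by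
        intro r hr hrT
        have : E ∩ Set.Ico r (r + δ) ⊆ E ∩ Set.Icc 0 T :=
          Set.inter_subset_inter_right E (hIcoT r hr hrT)
        rw [hdisj] at this
        exact measure_mono_null this measure_empty
      rw [MeasureTheory.VectorMeasure.sub_apply,
        MeasureTheory.Measure.toSignedMeasure_apply_measurable hE,
        MeasureTheory.Measure.toSignedMeasure_apply_measurable hE,
        measureReal_def, measureReal_def,
        hPapp _ hE, hQmapp _ hE]
      rw [Finset.sum_eq_zero (fun i _ => by
          rw [hzero (p i) (hp0 i) (hpT i), mul_zero]),
        Finset.sum_eq_zero (fun i _ => by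
          rw [hzero (q i) (hq0 i) (hqT i), mul_zero])]
      simp
  -- compute the integral
  have hintD : intD T x A = (∫ t, x t ∂P) - ∫ t, x t ∂Qm := by
    rw [l33_intD_eq hT.le A x _ hrep]
    exact l33_sInt_eq P Qm hsing x
  have hcδtop : (ENNReal.ofReal (c/δ)) ≠ ⊤ := ENNReal.ofReal_ne_top
  have hρint : ∀ i, Integrable x (ρ i) := by
    intro i
    simp only [hρdef]
    exact ((hintp i).1).smul_measure hcδtop
  have hσint : ∀ i, Integrable x (σm i) := by
    intro i
    simp only [hσdef]
    exact ((hintq i).1).smul_measure hcδtop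
  have hPint : (∫ t, x t ∂P) = ∑ i ∈ Finset.range n, ∫ t, x t ∂(ρ i) := by
    rw [hPdef]
    exact integral_finset_sum_measure (fun i _ => hρint i)
  have hQint : (∫ t, x t ∂Qm) = ∑ i ∈ Finset.range n, ∫ t, x t ∂(σm i) := by
    rw [hQmdef]
    exact integral_finset_sum_measure (fun i _ => hσint i)
  have hρlow : ∀ i, c * b ≤ ∫ t, x t ∂(ρ i) := by
    intro i
    have h8 : (∫ t, x t ∂(ρ i)) = (c/δ) * ∫ t, x t ∂(volume.restrict (Set.Ico (p i) (p i + δ))) := by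
      simp only [hρdef]
      rw [integral_smul_measure, ENNReal.toReal_ofReal hcδ, smul_eq_mul]
    rw [h8]
    have h9 := (hintp i).2.1
    calc c * b = (c/δ) * (b * δ) := by field_simp
      _ ≤ (c/δ) * ∫ t, x t ∂(volume.restrict (Set.Ico (p i) (p i + δ))) :=
        mul_le_mul_of_nonneg_left h9 hcδ
  have hσhigh : ∀ i, (∫ t, x t ∂(σm i)) ≤ c * a := by
    intro i
    have h8 : (∫ t, x t ∂(σm i)) = (c/δ) * ∫ t, x t ∂(volume.restrict (Set.Ico (q i) (q i + δ))) := by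
      simp only [hσdef]
      rw [integral_smul_measure, ENNReal.toReal_ofReal hcδ, smul_eq_mul]
    rw [h8]
    have h9 := (hintq i).2.2
    calc (c/δ) * ∫ t, x t ∂(volume.restrict (Set.Ico (q i) (q i + δ)))
        ≤ (c/δ) * (a * δ) := mul_le_mul_of_nonneg_left h9 hcδ
      _ = c * a := by field_simp
  have hsumlow : (n:ℝ) * (c * b) ≤ ∫ t, x t ∂P := by
    rw [hPint]
    calc (n:ℝ) * (c * b) = ∑ _i ∈ Finset.range n, c * b := by
          rw [Finset.sum_const, Finset.card_range, nsmul_eq_mul]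
      _ ≤ ∑ i ∈ Finset.range n, ∫ t, x t ∂(ρ i) :=
        Finset.sum_le_sum fun i _ => hρlow i
  have hsumhigh : (∫ t, x t ∂Qm) ≤ (n:ℝ) * (c * a) := by
    rw [hQint]
    calc ∑ i ∈ Finset.range n, ∫ t, x t ∂(σm i)
        ≤ ∑ _i ∈ Finset.range n, c * a := Finset.sum_le_sum fun i _ => hσhigh i
      _ = (n:ℝ) * (c * a) := by rw [Finset.sum_const, Finset.card_range, nsmul_eq_mul]
  have hfinal : b - a ≤ intD T x A := by
    rw [hintD]
    have heq1 : (n:ℝ) * (c * b) = b := by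
      rw [show (n:ℝ) * (c * b) = ((n:ℝ) * c) * b by ring, hnc, one_mul]
    have heq2 : (n:ℝ) * (c * a) = a := by
      rw [show (n:ℝ) * (c * a) = ((n:ℝ) * c) * a by ring, hnc, one_mul]
    linarith
  exact ⟨A, ⟨hAcont.continuousOn, hBV, hA0⟩, hfinal, heVar, hssup⟩

end
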